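/- arXiv:2302.06032 — 2 statements merged into one kernel-verified Lean document; each statement's English description precedes it below -/
import Mathlib

section
/- Suppose $F: \mathbb{R}^d \to \mathbb{R}$ is differentiable and each partial derivative satisfies the coordinatewise smoothness bound $|\partial_j F(x) - \partial_j F(y)| \le \frac{L_j}{\sqrt{d}} \|x - y\|_2$ for all $x, y$. Then for all $x, y \in \mathbb{R}^d$, $F(x) - F(y) \le \langle \nabla F(y), x - y\rangle + \left(\sum_{j=1}^d L_j |x_j - y_j|\right) \frac{\|x-y\|_2}{2\sqrt{d}}$. -/
theorem stmt_9 (d : ℕ) (F : EuclideanSpace ℝ (Fin d) → ℝ)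
    (hF : Differentiable ℝ F) (L : Fin d → ℝ) (hL : ∀ j, 0 < L j)
    (hsmooth : ∀ x y : EuclideanSpace ℝ (Fin d), ∀ j : Fin d,
      |fderiv ℝ F x (EuclideanSpace.single j 1) - fderiv ℝ F y (EuclideanSpace.single j 1)|
        ≤ L j / Real.sqrt d * ‖x - y‖) :
    ∀ x y : EuclideanSpace ℝ (Fin d),
      F x - F y ≤ fderiv ℝ F y (x - y)
        + (∑ j, L j * |x j - y j|) * ‖x - y‖ / (2 * Real.sqrt d) := by
  intro x y
  -- vector decomposition lemma
  have hdecomp : ∀ (φ : EuclideanSpace ℝ (Fin d) →L[ℝ] ℝ) (v : EuclideanSpace ℝ (Fin d)),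
      φ v = ∑ j, v j * φ (EuclideanSpace.single j 1) := by
    intro φ v
    have hv : v = ∑ j, v j • EuclideanSpace.single j (1:ℝ) := by
      have := (EuclideanSpace.basisFun (Fin d) ℝ).toBasis.sum_repr v
      simpa [EuclideanSpace.basisFun_apply] using this.symm
    conv_lhs => rw [hv]
    rw [map_sum]
    simp [smul_eq_mul]
  set v : EuclideanSpace ℝ (Fin d) := x - y with hv
  have hvj : ∀ j, v j = x j - y j := fun j => rfl
  set A : ℝ := fderiv ℝ F y v with hA
  set S : ℝ := ∑ j, L j * |x j - y j| with hS
  set B : ℝ := S * ‖v‖ / Real.sqrt d with hB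
  -- curve
  set c : ℝ → EuclideanSpace ℝ (Fin d) := fun t => y + t • v with hc
  have hcderiv : ∀ t : ℝ, HasDerivAt c v t := by
    intro t
    have := ((hasDerivAt_id t).smul_const v).const_add y
    simpa [hc] using this
  have hg : ∀ t : ℝ, HasDerivAt (fun t => F (c t)) (fderiv ℝ F (c t) v) t := by
    intro t
    exact (hF (c t)).hasFDerivAt.comp_hasDerivAt t (hcderiv t)
  -- the derivative bound
  have hbound : ∀ t ∈ Set.Icc (0:ℝ) 1, fderiv ℝ F (c t) v ≤ A + B * t := by
    intro t ht
    have hct : ‖c t - y‖ = t * ‖v‖ := by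
      have : c t - y = t • v := by simp [hc]
      rw [this, norm_smul, Real.norm_eq_abs, abs_of_nonneg ht.1]
    have key : fderiv ℝ F (c t) v - A ≤ B * t := by
      rw [hA, hdecomp (fderiv ℝ F (c t)) v, hdecomp (fderiv ℝ F y) v, ← Finset.sum_sub_distrib]
      have step : ∀ j ∈ Finset.univ, v j * (fderiv ℝ F (c t)) (EuclideanSpace.single j 1)
          - v j * (fderiv ℝ F y) (EuclideanSpace.single j 1)
          ≤ (L j * |x j - y j|) * (‖v‖ / Real.sqrt d * t) := by
        intro j _
        rw [← mul_sub]
        calc v j * ((fderiv ℝ F (c t)) (EuclideanSpace.single j 1)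
              - (fderiv ℝ F y) (EuclideanSpace.single j 1))
            ≤ |v j * ((fderiv ℝ F (c t)) (EuclideanSpace.single j 1)
              - (fderiv ℝ F y) (EuclideanSpace.single j 1))| := le_abs_self _
          _ = |v j| * |(fderiv ℝ F (c t)) (EuclideanSpace.single j 1)
              - (fderiv ℝ F y) (EuclideanSpace.single j 1)| := abs_mul _ _
          _ ≤ |v j| * (L j / Real.sqrt d * ‖c t - y‖) := by
              exact mul_le_mul_of_nonneg_left (hsmooth (c t) y j) (abs_nonneg _)
          _ = (L j * |x j - y j|) * (‖v‖ / Real.sqrt d * t) := by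
              rw [hct, hvj j]; ring
      calc ∑ j, (v j * (fderiv ℝ F (c t)) (EuclideanSpace.single j 1)
            - v j * (fderiv ℝ F y) (EuclideanSpace.single j 1))
          ≤ ∑ j, (L j * |x j - y j|) * (‖v‖ / Real.sqrt d * t) := Finset.sum_le_sum step
        _ = B * t := by rw [← Finset.sum_mul, ← hS, hB]; ring
    linarith
  -- auxiliary function
  set φ : ℝ → ℝ := fun t => F (c t) - A * t - B * t ^ 2 / 2 with hφ
  have hφderiv : ∀ t : ℝ, HasDerivAt φ (fderiv ℝ F (c t) v - (A + B * t)) t := by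
    intro t
    have h1 : HasDerivAt (fun t : ℝ => A * t) A t := by
      simpa using (hasDerivAt_id t).const_mul A
    have h2 : HasDerivAt (fun t : ℝ => B * t ^ 2 / 2) (B * t) t := by
      have := ((hasDerivAt_pow 2 t).const_mul B).div_const 2
      simpa using this.congr_deriv (by ring)
    have := ((hg t).sub h1).sub h2
    exact this.congr_deriv (by ring)
  have hmono : AntitoneOn φ (Set.Icc (0:ℝ) 1) := by
    apply antitoneOn_of_deriv_nonpos (convex_Icc 0 1)
    · exact (fun t _ => ((hφderiv t).differentiableAt).continuousAt.continuousWithinAt)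
    · exact fun t _ => ((hφderiv t).differentiableAt).differentiableWithinAt
    · intro t ht
      rw [interior_Icc] at ht
      rw [(hφderiv t).deriv]
      have := hbound t ⟨le_of_lt ht.1, le_of_lt ht.2⟩
      linarith
  have h01 : φ 1 ≤ φ 0 := hmono ⟨le_refl 0, zero_le_one⟩ ⟨zero_le_one, le_refl 1⟩ zero_le_one
  have hc0 : c 0 = y := by simp [hc]
  have hc1 : c 1 = x := by simp [hc, hv]
  have hφ0 : φ 0 = F y := by simp [hφ, hc0]
  have hφ1 : φ 1 = F x - A - B / 2 := by simp [hφ, hc1]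
  have hfinal : F x - F y ≤ A + B / 2 := by
    rw [hφ0, hφ1] at h01; linarith
  have hB2 : B / 2 = S * ‖v‖ / (2 * Real.sqrt d) := by
    rw [hB]; ring
  calc F x - F y ≤ A + B / 2 := hfinal
    _ = fderiv ℝ F y (x - y) + S * ‖x - y‖ / (2 * Real.sqrt d) := by
        rw [hB2, hA, ← hv]
end

section
/- Let $F:\mathbb{R}^d\to\mathbb{R}$ be differentiable with coordinatewise smoothness $|\partial_j F(x)-\partial_j F(y)| \le (L_j/\sqrt{d})\|x-y\|_2$, and let $x_{t+1} = x_t - \eta m_t/\sqrt{v_t}$ coordinatewise with $v_t$ as in the Generalized SignSTORM algorithm ($v_0=0$, $v_t = \beta_2 v_{t-1}+(1-\beta_2)m_t^2$, $0\le\beta_2<1$). Then $F(x_{t+1}) - F(x_t) \le -\sum_{j=1}^{d} \frac{\eta\, \partial_j F(x_t)\, m_{t,j}}{\sqrt{v_{t,j}}} + \frac{\eta^2 \|L\|_1}{2(1-\beta_2)}$, where $\|L\|_1 = \sum_j L_j$. -/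
lemma ratio_bound {c a w : ℝ} (hc : 0 < c) (h : c * a ^ 2 ≤ w) :
    |a / Real.sqrt w| ≤ 1 / Real.sqrt c := by
  have hw : 0 ≤ w := le_trans (by positivity) h
  rcases eq_or_lt_of_le hw with hw0 | hw0
  · have hle : c * a ^ 2 ≤ 0 := hw0 ▸ h
    have ha : a = 0 := by
      by_contra h'
      have h2 : 0 < a ^ 2 := pow_pos (abs_pos.mpr h') 2 |>.trans_le (by rw [sq_abs])
      nlinarith [mul_pos hc h2]
    rw [ha]
    simp
  · have hsw : 0 < Real.sqrt w := Real.sqrt_pos.mpr hw0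
    have hsc : 0 < Real.sqrt c := Real.sqrt_pos.mpr hc
    rw [abs_div, abs_of_nonneg hsw.le, div_le_div_iff₀ hsw hsc]
    have h1 : |a| * Real.sqrt c = Real.sqrt (c * a ^ 2) := by
      rw [Real.sqrt_mul hc.le, Real.sqrt_sq_eq_abs]; ring
    rw [h1, one_mul]
    exact Real.sqrt_le_sqrt h


lemma clm_apply_sum {d : ℕ} (f : EuclideanSpace ℝ (Fin d) →L[ℝ] ℝ)
    (u : EuclideanSpace ℝ (Fin d)) :
    f u = ∑ j, u j * f (EuclideanSpace.single j 1) := by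
  have h := (EuclideanSpace.basisFun (Fin d) ℝ).sum_repr u
  conv_lhs => rw [← h]
  simp [EuclideanSpace.basisFun_apply, smul_eq_mul]

lemma descent {d : ℕ} {F : EuclideanSpace ℝ (Fin d) → ℝ}
    (hF : Differentiable ℝ F) {L : Fin d → ℝ} (hL : ∀ j, 0 ≤ L j)
    (hsmooth : ∀ x y : EuclideanSpace ℝ (Fin d), ∀ j : Fin d,
      |fderiv ℝ F x (EuclideanSpace.single j 1) - fderiv ℝ F y (EuclideanSpace.single j 1)|
        ≤ L j / Real.sqrt d * ‖x - y‖)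
    (x y : EuclideanSpace ℝ (Fin d)) :
    F y - F x ≤ fderiv ℝ F x (y - x)
      + (∑ j, L j / Real.sqrt d * |y j - x j|) * ‖y - x‖ / 2 := by
  set u : EuclideanSpace ℝ (Fin d) := y - x with hu
  set γ : ℝ → EuclideanSpace ℝ (Fin d) := fun s => x + s • u with hγdef
  have hγ : ∀ s : ℝ, HasDerivAt γ u s := by
    intro s
    simpa [hγdef] using ((hasDerivAt_id s).smul_const u).const_add x
  set φ : ℝ → ℝ := fun s => fderiv ℝ F (γ s) u with hφdef
  have hg : ∀ s : ℝ, HasDerivAt (fun s => F (γ s)) (φ s) s := by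
    intro s
    exact ((hF (γ s)).hasFDerivAt).comp_hasDerivAt s (hγ s)
  have hK : ∀ j, 0 ≤ L j / Real.sqrt d := fun j =>
    div_nonneg (hL j) (Real.sqrt_nonneg _)
  set K : ℝ := (∑ j, L j / Real.sqrt d * |u j|) * ‖u‖ with hKdef
  have hK0 : 0 ≤ K := by
    apply mul_nonneg _ (norm_nonneg _)
    exact Finset.sum_nonneg fun j _ => mul_nonneg (hK j) (abs_nonneg _)
  have hlip : ∀ s t : ℝ, |φ s - φ t| ≤ K * |s - t| := by
    intro s t
    have hst : γ s - γ t = (s - t) • u := by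
      show (x + s • u) - (x + t • u) = (s - t) • u
      rw [sub_smul]; abel
    have hnst : ‖γ s - γ t‖ = |s - t| * ‖u‖ := by
      rw [hst, norm_smul, Real.norm_eq_abs]
    have hs1 := clm_apply_sum (fderiv ℝ F (γ s)) u
    have hs2 := clm_apply_sum (fderiv ℝ F (γ t)) u
    have h1 : φ s - φ t
        = ∑ j, u j * (fderiv ℝ F (γ s) (EuclideanSpace.single j 1)
            - fderiv ℝ F (γ t) (EuclideanSpace.single j 1)) := by
      show (fderiv ℝ F (γ s)) u - (fderiv ℝ F (γ t)) u = _
      rw [hs1, hs2, ← Finset.sum_sub_distrib]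
      congr 1; ext j; ring
    rw [h1]
    calc |∑ j, u j * (fderiv ℝ F (γ s) (EuclideanSpace.single j 1)
            - fderiv ℝ F (γ t) (EuclideanSpace.single j 1))|
        ≤ ∑ j, |u j| * |fderiv ℝ F (γ s) (EuclideanSpace.single j 1)
            - fderiv ℝ F (γ t) (EuclideanSpace.single j 1)| := by
          refine (Finset.abs_sum_le_sum_abs _ _).trans ?_
          refine Finset.sum_le_sum fun j _ => ?_
          rw [abs_mul]
      _ ≤ ∑ j, |u j| * (L j / Real.sqrt d * ‖γ s - γ t‖) := by
          refine Finset.sum_le_sum fun j _ => ?_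
          exact mul_le_mul_of_nonneg_left (hsmooth _ _ j) (abs_nonneg _)
      _ = K * |s - t| := by
          rw [hnst, hKdef, Finset.sum_mul, Finset.sum_mul]
          congr 1; ext j; ring
  have hφcont : Continuous φ := by
    refine (LipschitzWith.of_dist_le_mul (K := K.toNNReal) fun s t => ?_).continuous
    rw [Real.dist_eq, Real.dist_eq, Real.coe_toNNReal _ hK0]
    exact hlip s t
  have hint : ∫ s in (0:ℝ)..1, φ s = F y - F x := by
    have heq := intervalIntegral.integral_eq_sub_of_hasDerivAt
      (f := fun s => F (γ s)) (f' := φ) (a := 0) (b := 1)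
      (fun s _ => hg s) (hφcont.intervalIntegrable 0 1)
    rw [heq]
    show F (γ 1) - F (γ 0) = F y - F x
    have h0 : γ 0 = x := by simp [hγdef]
    have h1 : γ 1 = y := by simp [hγdef, hu]
    rw [h0, h1]
  have hφ0 : φ 0 = fderiv ℝ F x u := by
    have h0 : γ 0 = x := by simp [hγdef]
    show fderiv ℝ F (γ 0) u = _
    rw [h0]
  have hbound : ∀ s ∈ Set.Icc (0:ℝ) 1, φ s ≤ φ 0 + K * s := by
    intro s hs
    have h := hlip s 0
    rw [sub_zero] at h
    have h2 : φ s - φ 0 ≤ K * |s| := (le_abs_self _).trans h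
    rw [abs_of_nonneg hs.1] at h2
    linarith
  have hiK : IntervalIntegrable (fun s : ℝ => K * s) MeasureTheory.volume 0 1 :=
    (continuous_const.mul continuous_id).intervalIntegrable 0 1
  have hi2 : IntervalIntegrable (fun s : ℝ => φ 0 + K * s) MeasureTheory.volume 0 1 :=
    intervalIntegrable_const.add hiK
  have hint2 : ∫ s in (0:ℝ)..1, φ s ≤ ∫ s in (0:ℝ)..1, (φ 0 + K * s) :=
    intervalIntegral.integral_mono_on (by norm_num)
      (hφcont.intervalIntegrable 0 1) hi2 hbound
  have hint3 : (∫ s in (0:ℝ)..1, (φ 0 + K * s)) = φ 0 + K / 2 := by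
    rw [intervalIntegral.integral_add intervalIntegrable_const hiK,
      intervalIntegral.integral_const_mul, integral_id]
    norm_num
    ring
  rw [← hint]
  calc ∫ s in (0:ℝ)..1, φ s ≤ φ 0 + K / 2 := by rw [← hint3]; exact hint2
    _ = fderiv ℝ F x (y - x) + (∑ j, L j / Real.sqrt d * |y j - x j|) * ‖y - x‖ / 2 := by
        rw [hφ0, hKdef, hu]
        have huj : ∀ j : Fin d, (y - x : EuclideanSpace ℝ (Fin d)) j = y j - x j :=
          fun j => rfl
        simp only [huj]


theorem stmt_17 (d : ℕ) (F : EuclideanSpace ℝ (Fin d) → ℝ)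
    (hF : Differentiable ℝ F) (L : Fin d → ℝ) (hL : ∀ j, 0 < L j)
    (η β₂ : ℝ) (hη : 0 < η) (hβ₂0 : 0 ≤ β₂) (hβ₂1 : β₂ < 1)
    (hsmooth : ∀ x y : EuclideanSpace ℝ (Fin d), ∀ j : Fin d,
      |fderiv ℝ F x (EuclideanSpace.single j 1) - fderiv ℝ F y (EuclideanSpace.single j 1)|
        ≤ L j / Real.sqrt d * ‖x - y‖)
    (x m v : ℕ → EuclideanSpace ℝ (Fin d))
    (hv0 : ∀ j, v 0 j = 0)
    (hvrec : ∀ t : ℕ, 1 ≤ t → ∀ j, v t j = β₂ * v (t - 1) j + (1 - β₂) * (m t j) ^ 2)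
    (hx : ∀ t : ℕ, 1 ≤ t → ∀ j, x (t + 1) j = x t j - η * m t j / Real.sqrt (v t j)) :
    ∀ t : ℕ, 1 ≤ t →
      F (x (t + 1)) - F (x t)
        ≤ -(∑ j, η * fderiv ℝ F (x t) (EuclideanSpace.single j 1) * m t j
              / Real.sqrt (v t j))
          + η ^ 2 * (∑ j, L j) / (2 * (1 - β₂)) := by
  intro t ht
  have hβ : 0 < 1 - β₂ := by linarith
  have hvnn : ∀ s j, 0 ≤ v s j := by
    intro s
    induction s with
    | zero => intro j; rw [hv0]
    | succ n ih =>
        intro j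
        rw [hvrec (n + 1) (by omega) j]
        simp only [Nat.add_sub_cancel]
        have := ih j
        nlinarith [sq_nonneg (m (n + 1) j)]
  have hstep : ∀ j, |x (t + 1) j - x t j| ≤ η / Real.sqrt (1 - β₂) := by
    intro j
    rw [hx t ht j]
    have h1 : x t j - η * m t j / Real.sqrt (v t j) - x t j
        = -(η * (m t j / Real.sqrt (v t j))) := by ring
    rw [h1, abs_neg, abs_mul, abs_of_nonneg hη.le]
    have hvm : (1 - β₂) * (m t j) ^ 2 ≤ v t j := by
      rw [hvrec t ht j]
      nlinarith [hvnn (t - 1) j]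
    have h2 := ratio_bound hβ hvm
    calc η * |m t j / Real.sqrt (v t j)| ≤ η * (1 / Real.sqrt (1 - β₂)) :=
          mul_le_mul_of_nonneg_left h2 hη.le
      _ = η / Real.sqrt (1 - β₂) := by ring
  have hB : 0 ≤ η / Real.sqrt (1 - β₂) := by positivity
  have hnorm : ‖x (t + 1) - x t‖ ≤ η / Real.sqrt (1 - β₂) * Real.sqrt d := by
    rw [EuclideanSpace.norm_eq]
    have h2 : ∑ j, ‖(x (t + 1) - x t : EuclideanSpace ℝ (Fin d)) j‖ ^ 2
        ≤ ∑ _j : Fin d, (η / Real.sqrt (1 - β₂)) ^ 2 := by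
      refine Finset.sum_le_sum fun j _ => ?_
      have hc : ‖(x (t + 1) - x t : EuclideanSpace ℝ (Fin d)) j‖
          = |x (t + 1) j - x t j| := rfl
      rw [hc]
      exact pow_le_pow_left₀ (abs_nonneg _) (hstep j) 2
    calc Real.sqrt (∑ j, ‖(x (t + 1) - x t : EuclideanSpace ℝ (Fin d)) j‖ ^ 2)
        ≤ Real.sqrt (∑ _j : Fin d, (η / Real.sqrt (1 - β₂)) ^ 2) := Real.sqrt_le_sqrt h2
      _ = η / Real.sqrt (1 - β₂) * Real.sqrt d := by
          rw [Finset.sum_const, Finset.card_univ, Fintype.card_fin, nsmul_eq_mul,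
            Real.sqrt_mul (by positivity), Real.sqrt_sq hB]
          ring
  have hdes := descent hF (fun j => (hL j).le) hsmooth (x t) (x (t + 1))
  have hΔ : ∀ j : Fin d, (x (t + 1) - x t : EuclideanSpace ℝ (Fin d)) j
      = x (t + 1) j - x t j := fun j => rfl
  -- first term
  have hfirst : fderiv ℝ F (x t) (x (t + 1) - x t)
      = -(∑ j, η * fderiv ℝ F (x t) (EuclideanSpace.single j 1) * m t j
            / Real.sqrt (v t j)) := by
    rw [clm_apply_sum, ← Finset.sum_neg_distrib]
    refine Finset.sum_congr rfl fun j _ => ?_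
    rw [hΔ j, hx t ht j]
    ring
  -- second term
  have hLnn : 0 ≤ ∑ j, L j := Finset.sum_nonneg fun j _ => (hL j).le
  have hsecond : (∑ j, L j / Real.sqrt d * |x (t + 1) j - x t j|) * ‖x (t + 1) - x t‖ / 2
      ≤ η ^ 2 * (∑ j, L j) / (2 * (1 - β₂)) := by
    rcases Nat.eq_zero_or_pos d with hd | hd
    · subst hd
      simp
    · have hsd : 0 < Real.sqrt d := Real.sqrt_pos.mpr (by positivity)
      have hsum : (∑ j, L j / Real.sqrt d * |x (t + 1) j - x t j|)
          ≤ (∑ j, L j) / Real.sqrt d * (η / Real.sqrt (1 - β₂)) := by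
        rw [Finset.sum_div, Finset.sum_mul]
        refine Finset.sum_le_sum fun j _ => ?_
        exact mul_le_mul_of_nonneg_left (hstep j)
          (div_nonneg (hL j).le (Real.sqrt_nonneg _))
      have hsnn : 0 ≤ ∑ j, L j / Real.sqrt d * |x (t + 1) j - x t j| :=
        Finset.sum_nonneg fun j _ =>
          mul_nonneg (div_nonneg (hL j).le (Real.sqrt_nonneg _)) (abs_nonneg _)
      have hmul : (∑ j, L j / Real.sqrt d * |x (t + 1) j - x t j|) * ‖x (t + 1) - x t‖
          ≤ ((∑ j, L j) / Real.sqrt d * (η / Real.sqrt (1 - β₂)))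
            * (η / Real.sqrt (1 - β₂) * Real.sqrt d) :=
        mul_le_mul hsum hnorm (norm_nonneg _) (by positivity)
      have heq : ((∑ j, L j) / Real.sqrt d * (η / Real.sqrt (1 - β₂)))
          * (η / Real.sqrt (1 - β₂) * Real.sqrt d) / 2
          = η ^ 2 * (∑ j, L j) / (2 * (1 - β₂)) := by
        have hsq : Real.sqrt (1 - β₂) * Real.sqrt (1 - β₂) = 1 - β₂ :=
          Real.mul_self_sqrt hβ.le
        field_simp
        ring_nf
        rw [Real.sq_sqrt hβ.le]
        ring
      linarith
  calc F (x (t + 1)) - F (x t)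
      ≤ fderiv ℝ F (x t) (x (t + 1) - x t)
        + (∑ j, L j / Real.sqrt d * |x (t + 1) j - x t j|) * ‖x (t + 1) - x t‖ / 2 := hdes
    _ ≤ -(∑ j, η * fderiv ℝ F (x t) (EuclideanSpace.single j 1) * m t j
            / Real.sqrt (v t j)) + η ^ 2 * (∑ j, L j) / (2 * (1 - β₂)) := by
        rw [hfirst]
        linarith
end
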